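/- Let f : Finset α → ℝ be a function such that C_f(D) = 0 for every finite set D with |D| > n, where C_f(D) = Σ_{H ⊆ D} (−1)^{|D| − |H|} f(H). Then f is finite type of order ≤ n: for every pair of finite sets D′ ⊆ D with |D| − |D′| > n, Σ_{D′ ⊆ H ⊆ D} (−1)^{|D| − |H|} f(H) = 0. -/
import Mathlib

open Finset

/-- The alternating-sum transform `C_f(D) = Σ_{H ⊆ D} (−1)^(|D| − |H|) f(H)`. -/
noncomputable def Cf {α : Type*} (f : Finset α → ℝ) (D : Finset α) : ℝ :=
  ∑ H ∈ D.powerset, (-1 : ℝ) ^ (D.card - H.card) * f H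

/-- `f` is finite type of order ≤ n: for all `D' ⊆ D` with `|D| − |D'| > n`,
the alternating sum `Σ_{D' ⊆ H ⊆ D} (−1)^(|D| − |H|) f(H)` vanishes. -/
def FiniteTypeLE {α : Type*} [DecidableEq α] (n : ℕ) (f : Finset α → ℝ) : Prop :=
  ∀ D' D : Finset α, D' ⊆ D → D.card - D'.card > n →
    ∑ H ∈ D.powerset.filter (fun H => D' ⊆ H),
      (-1 : ℝ) ^ (D.card - H.card) * f H = 0

lemma base_sum {α : Type*} [DecidableEq α] (S : Finset α) :
    ∑ T ∈ S.powerset, (-1 : ℝ) ^ T.card = if S = ∅ then 1 else 0 := by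
  have := @Finset.sum_powerset_neg_one_pow_card α _ S
  have h2 : ((∑ m ∈ S.powerset, (-1 : ℤ) ^ m.card : ℤ) : ℝ)
      = ∑ T ∈ S.powerset, (-1 : ℝ) ^ T.card := by push_cast; ring_nf
  rw [← h2, this]
  split <;> simp

/-- For `A ⊆ B`, the interval `[A, B]` maps bijectively to `powerset (B \ A)`. -/
lemma interval_sum {α : Type*} [DecidableEq α] {A B : Finset α} (hAB : A ⊆ B)
    (g : ℕ → ℝ) :
    ∑ K ∈ B.powerset.filter (fun K => A ⊆ K), g K.card
      = ∑ T ∈ (B \ A).powerset, g (T.card + A.card) := by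
  refine Finset.sum_nbij' (fun K => K \ A) (fun T => A ∪ T) ?_ ?_ ?_ ?_ ?_
  · intro K hK
    simp only [mem_filter, mem_powerset] at hK
    simpa [mem_powerset] using sdiff_subset_sdiff hK.1 Subset.rfl
  · intro T hT
    simp only [mem_powerset] at hT
    simp only [mem_filter, mem_powerset]
    constructor
    · exact union_subset hAB ((hT.trans (sdiff_subset)))
    · exact subset_union_left
  · intro K hK
    simp only [mem_filter, mem_powerset] at hK
    show A ∪ (K \ A) = K
    rw [union_sdiff_of_subset hK.2]
  · intro T hT
    simp only [mem_powerset] at hT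
    show (A ∪ T) \ A = T
    rw [union_sdiff_cancel_left (disjoint_of_subset_right hT (disjoint_sdiff))]
  · intro K hK
    simp only [mem_filter, mem_powerset] at hK
    congr 1
    rw [card_sdiff_of_subset hK.2, Nat.sub_add_cancel (card_le_card hK.2)]

lemma sign_sum_up {α : Type*} [DecidableEq α] {A B : Finset α} (hAB : A ⊆ B) :
    ∑ K ∈ B.powerset.filter (fun K => A ⊆ K), (-1 : ℝ) ^ (K.card - A.card)
      = if A = B then 1 else 0 := by
  rw [interval_sum hAB (fun m => (-1 : ℝ) ^ (m - A.card))]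
  simp only [Nat.add_sub_cancel]
  rw [base_sum]
  have : B \ A = ∅ ↔ A = B := by
    rw [sdiff_eq_empty_iff_subset]
    exact ⟨fun h => Subset.antisymm hAB h, fun h => h ▸ Subset.rfl⟩
  simp [this]

lemma sign_sum_down {α : Type*} [DecidableEq α] {A B : Finset α} (hAB : A ⊆ B) :
    ∑ K ∈ B.powerset.filter (fun K => A ⊆ K), (-1 : ℝ) ^ (B.card - K.card)
      = if A = B then 1 else 0 := by
  have key : ∀ K ∈ B.powerset.filter (fun K => A ⊆ K),
      (-1 : ℝ) ^ (B.card - K.card) = (-1 : ℝ) ^ B.card * (-1 : ℝ) ^ K.card := by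
    intro K hK
    simp only [mem_filter, mem_powerset] at hK
    have hle : K.card ≤ B.card := card_le_card hK.1
    have : (-1 : ℝ) ^ B.card = (-1 : ℝ) ^ (B.card - K.card) * (-1 : ℝ) ^ K.card := by
      rw [← pow_add, Nat.sub_add_cancel hle]
    rw [this, mul_assoc, ← pow_add, Even.neg_one_pow ⟨K.card, rfl⟩, mul_one]
  rw [Finset.sum_congr rfl key, ← Finset.mul_sum,
    interval_sum hAB (fun m => (-1 : ℝ) ^ m)]
  have : ∀ T ∈ (B \ A).powerset, (-1 : ℝ) ^ (T.card + A.card)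
      = (-1 : ℝ) ^ A.card * (-1 : ℝ) ^ T.card := fun T _ => by rw [pow_add]; ring
  rw [Finset.sum_congr rfl this, ← Finset.mul_sum, base_sum]
  have heq : B \ A = ∅ ↔ A = B := by
    rw [sdiff_eq_empty_iff_subset]
    exact ⟨fun h => Subset.antisymm hAB h, fun h => h ▸ Subset.rfl⟩
  by_cases h : A = B
  · subst h
    simp [← pow_add, Even.neg_one_pow (⟨A.card, rfl⟩ : Even (A.card + A.card))]
  · simp [h, heq, if_neg]

/-- Inversion: `f(D) = Σ_{K ⊆ D} C_f(K)`. -/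
lemma Cf_inversion {α : Type*} [DecidableEq α] (f : Finset α → ℝ) (D : Finset α) :
    f D = ∑ K ∈ D.powerset, Cf f K := by
  classical
  have swap :
      ∑ K ∈ D.powerset, ∑ H ∈ K.powerset, (-1 : ℝ) ^ (K.card - H.card) * f H
        = ∑ H ∈ D.powerset, ∑ K ∈ D.powerset.filter (fun K => H ⊆ K),
            (-1 : ℝ) ^ (K.card - H.card) * f H := by
    refine Finset.sum_comm' ?_
    intro K H
    simp only [mem_powerset, mem_filter]
    constructor
    · rintro ⟨h1, h2⟩; exact ⟨⟨h1, h2⟩, h2.trans h1⟩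
    · rintro ⟨⟨h1, h2⟩, h3⟩; exact ⟨h1, h2⟩
  simp only [Cf]
  rw [swap]
  have : ∀ H ∈ D.powerset,
      ∑ K ∈ D.powerset.filter (fun K => H ⊆ K), (-1 : ℝ) ^ (K.card - H.card) * f H
        = (if H = D then 1 else 0) * f H := by
    intro H hH
    rw [← Finset.sum_mul, sign_sum_up (mem_powerset.mp hH)]
  rw [Finset.sum_congr rfl this]
  simp

/-- If `C_f(D) = 0` for every `D` with `|D| > n`, then `f` is finite type of order ≤ n. -/
theorem finiteType_of_Cf_eq_zero {α : Type*} [DecidableEq α] (n : ℕ) (f : Finset α → ℝ)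
    (hC : ∀ D : Finset α, D.card > n → Cf f D = 0) :
    FiniteTypeLE n f := by
  intro D' D hsub hcard
  calc ∑ H ∈ D.powerset.filter (fun H => D' ⊆ H),
        (-1 : ℝ) ^ (D.card - H.card) * f H
      = ∑ H ∈ D.powerset.filter (fun H => D' ⊆ H),
          ∑ K ∈ H.powerset, (-1 : ℝ) ^ (D.card - H.card) * Cf f K := by
        refine Finset.sum_congr rfl fun H _ => ?_
        rw [Cf_inversion f H, Finset.mul_sum]
    _ = ∑ K ∈ D.powerset, ∑ H ∈ D.powerset.filter (fun H => D' ∪ K ⊆ H),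
          (-1 : ℝ) ^ (D.card - H.card) * Cf f K := by
        refine Finset.sum_comm' ?_
        intro H K
        simp only [mem_filter, mem_powerset, union_subset_iff]
        constructor
        · rintro ⟨⟨h1, h2⟩, h3⟩; exact ⟨⟨h1, h2, h3⟩, h3.trans h1⟩
        · rintro ⟨⟨h1, h2, h3⟩, _⟩; exact ⟨⟨h1, h2⟩, h3⟩
    _ = ∑ K ∈ D.powerset, (if D' ∪ K = D then 1 else 0) * Cf f K := by
        refine Finset.sum_congr rfl fun K hK => ?_
        rw [← Finset.sum_mul,
          sign_sum_down (union_subset hsub (mem_powerset.mp hK))]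
    _ = 0 := by
        refine Finset.sum_eq_zero fun K hK => ?_
        by_cases h : D' ∪ K = D
        · rw [if_pos h, one_mul]
          apply hC
          have h1 : D.card - D'.card ≤ K.card := by
            have : D \ D' ⊆ K := by
              intro x hx
              simp only [mem_sdiff] at hx
              have : x ∈ D' ∪ K := h ▸ hx.1
              rcases mem_union.mp this with h' | h'
              · exact absurd h' hx.2
              · exact h'
            calc D.card - D'.card = (D \ D').card := (card_sdiff_of_subset hsub).symm
              _ ≤ K.card := card_le_card this
          omega
        · rw [if_neg h, zero_mul]
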